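/- Let H be a real inner product space with inner product a(·,·) and induced norm ‖·‖_a, let W ⊆ H be a subspace, and let s : H × H → ℝ be a symmetric positive semidefinite bilinear form with ‖·‖_s := s(·,·)^{1/2}. Suppose φ ∈ H, φ̂ ∈ W satisfy the perturbed Galerkin orthogonality a(φ − φ̂, ψ) = s(φ, ψ) for all ψ ∈ W, and assume s satisfies the Cauchy–Schwarz-type bound |s(u, w)| ≤ ‖u‖_s ‖w‖_a for all u ∈ H, w ∈ W. Then for every I ∈ W, ‖I − φ̂‖_a ≤ ‖I − φ‖_a + ‖φ‖_s. -/

import Mathlib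

open RealInnerProductSpace

/-- Abstract version of estimate (aux380) in the proof of Theorem 5.2:
quasi-best-approximation bound for a Galerkin method with consistency error
given by the ghost-penalty form `s`. Here the inner product of `H` plays the
role of `a` and `‖·‖` of the energy norm `‖·‖_a`. -/
theorem stmt7
    {H : Type*} [NormedAddCommGroup H] [InnerProductSpace ℝ H]
    (W : Submodule ℝ H)
    (s : LinearMap.BilinForm ℝ H)
    (hssymm : ∀ x y, s x y = s y x) (hspos : ∀ x, 0 ≤ s x x)
    (φ : H) (φhat : H) (hφhat : φhat ∈ W)
    (hgal : ∀ ψ ∈ W, ⟪φ - φhat, ψ⟫ = s φ ψ)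
    (hCS : ∀ u : H, ∀ w ∈ W, |s u w| ≤ Real.sqrt (s u u) * ‖w‖) :
    ∀ I ∈ W, ‖I - φhat‖ ≤ ‖I - φ‖ + Real.sqrt (s φ φ) := by
  intro I hI
  set e := I - φhat with he
  have heW : e ∈ W := Submodule.sub_mem W hI hφhat
  have key : ‖e‖ ^ 2 ≤ (‖I - φ‖ + Real.sqrt (s φ φ)) * ‖e‖ := by
    have h1 : ‖e‖ ^ 2 = ⟪I - φ, e⟫ + ⟪φ - φhat, e⟫ := by
      rw [← real_inner_self_eq_norm_sq]
      rw [← inner_add_left]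
      congr 1
      rw [he]
      abel
    rw [h1, hgal e heW]
    have h2 : ⟪I - φ, e⟫ ≤ ‖I - φ‖ * ‖e‖ := real_inner_le_norm _ _
    have h3 : s φ e ≤ Real.sqrt (s φ φ) * ‖e‖ :=
      le_trans (le_abs_self _) (hCS φ e heW)
    nlinarith
  rcases eq_or_lt_of_le (norm_nonneg e) with h0 | h0
  · rw [← h0]
    positivity
  · nlinarith [key]
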